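/- arXiv:1804.04399 — 3 statements merged into one kernel-verified Lean document; each statement's English description precedes it below -/
import Mathlib

section
/- Let $I_1 = \sum_{d\ge 1} \frac{2\,(2d)!\,(2d-1)!}{(d!)^4} q^d \in \mathbb{Q}[[q]]$ be a formal power series, let $C_1 = 1 + q\, \frac{d I_1}{dq}$, let $\mathcal{X} = \big(q\,\frac{dC_1}{dq}\big)\cdot C_1^{-1}$ (well defined since $C_1$ has constant term $1$, hence is invertible in $\mathbb{Q}[[q]]$), and let $K \in \mathbb{Q}[[q]]$ be the multiplicative inverse of $1-16q$. Then the formal power series identity $\mathcal{X}^2 - (K-1)\,\mathcal{X} - \tfrac{1}{4}(K-1) + q\,\frac{d\mathcal{X}}{dq} = 0$ holds in $\mathbb{Q}[[q]]$. -/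
open PowerSeries

/-- The series `I₁ = ∑_{d≥1} 2 (2d)! (2d-1)! / (d!)^4 q^d` in `ℚ[[q]]`. -/
noncomputable def I₁ : PowerSeries ℚ :=
  PowerSeries.mk fun d => if d = 0 then 0 else
    (2 * (Nat.factorial (2 * d)) * (Nat.factorial (2 * d - 1)) : ℚ) /
      ((Nat.factorial d : ℚ)) ^ 4

/-- `C₁ = 1 + q dI₁/dq`. -/
noncomputable def C₁ : PowerSeries ℚ := 1 + PowerSeries.X * (d⁄dX ℚ I₁)

/-- `𝒳 = (q dC₁/dq) · C₁⁻¹`. -/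
noncomputable def 𝒳 : PowerSeries ℚ := (PowerSeries.X * (d⁄dX ℚ C₁)) * C₁⁻¹

/-- `K = (1 - 16 q)⁻¹`, the multiplicative inverse of `1 - 16 q` in `ℚ[[q]]`. -/
noncomputable def K : PowerSeries ℚ := (1 - 16 * PowerSeries.X)⁻¹

lemma coeff_Dop (f : PowerSeries ℚ) (n : ℕ) :
    coeff n (PowerSeries.X * d⁄dX ℚ f) = n * coeff n f := by
  cases n with
  | zero => simp [coeff_zero_eq_constantCoeff]
  | succ m => rw [coeff_succ_X_mul, coeff_derivative]; push_cast; ring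

lemma coeff_C₁ (n : ℕ) :
    coeff n C₁ = if n = 0 then 1 else
      (n : ℚ) * ((2 * (Nat.factorial (2 * n)) * (Nat.factorial (2 * n - 1)) : ℚ) /
      ((Nat.factorial n : ℚ)) ^ 4) := by
  rw [C₁, map_add, coeff_Dop, I₁, coeff_mk]
  cases n with
  | zero => simp
  | succ m => simp [coeff_one]

lemma rec_C₁ (n : ℕ) : ((n:ℚ)+1)^2 * coeff (n+1) C₁ = 4*(2*(n:ℚ)+1)^2 * coeff n C₁ := by
  cases n with
  | zero => simp [coeff_C₁]; norm_num [Nat.factorial]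
  | succ m =>
    rw [coeff_C₁, coeff_C₁]
    simp only [Nat.succ_ne_zero, if_false]
    have e1 : 2*(m+1+1) = 2*m+4 := by ring
    have e2 : 2*(m+1+1)-1 = 2*m+3 := by omega
    have e3 : 2*(m+1) = 2*m+2 := by ring
    have e4 : 2*(m+1)-1 = 2*m+1 := by omega
    rw [e2, e1, e4, e3]
    have f1 : ((2*m+4).factorial : ℚ) = (2*(m:ℚ)+4)*(2*(m:ℚ)+3)*((2*m+2).factorial : ℚ) := by
      rw [show 2*m+4 = (2*m+3)+1 from by ring, Nat.factorial_succ,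
        show 2*m+3 = (2*m+2)+1 from by ring, Nat.factorial_succ]
      push_cast; ring
    have f2 : ((2*m+3).factorial : ℚ) = (2*(m:ℚ)+3)*(2*(m:ℚ)+2)*((2*m+1).factorial : ℚ) := by
      rw [show 2*m+3 = (2*m+2)+1 from by ring, Nat.factorial_succ,
        show 2*m+2 = (2*m+1)+1 from by ring, Nat.factorial_succ]
      push_cast; ring
    have f3 : ((m+1+1).factorial : ℚ) = ((m:ℚ)+2)*((m+1).factorial : ℚ) := by
      rw [Nat.factorial_succ]; push_cast; ring
    rw [f1, f2, f3]
    have h1 : ((m+1).factorial : ℚ) ≠ 0 := Nat.cast_ne_zero.mpr (Nat.factorial_ne_zero _)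
    have h2 : ((m:ℚ)+2) ≠ 0 := by positivity
    field_simp
    push_cast
    ring

lemma coeff_X_mul (g : PowerSeries ℚ) (n : ℕ) :
    coeff n (PowerSeries.X * g) = if n = 0 then 0 else coeff (n-1) g := by
  cases n with
  | zero => simp [coeff_zero_eq_constantCoeff]
  | succ m => rw [coeff_succ_X_mul]; simp

lemma ODE_C₁ : (1 - 16*PowerSeries.X) * (PowerSeries.X * d⁄dX ℚ (PowerSeries.X * d⁄dX ℚ C₁))
    = 16*PowerSeries.X*(PowerSeries.X * d⁄dX ℚ C₁) + 4*PowerSeries.X*C₁ := by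
  have h16 : (16 : PowerSeries ℚ) = C (R := ℚ) 16 := (map_ofNat (C (R := ℚ)) 16).symm
  have h4 : (4 : PowerSeries ℚ) = C (R := ℚ) 4 := (map_ofNat (C (R := ℚ)) 4).symm
  have cD2 : ∀ k : ℕ, coeff k (PowerSeries.X * d⁄dX ℚ (PowerSeries.X * d⁄dX ℚ C₁))
      = (k:ℚ)^2 * coeff k C₁ := by
    intro k; rw [coeff_Dop, coeff_Dop]; ring
  ext n
  rw [sub_mul, one_mul, mul_assoc 16, mul_assoc 16, mul_assoc 4, map_sub, map_add, h16, h4,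
    coeff_C_mul, coeff_C_mul, coeff_C_mul, cD2]
  cases n with
  | zero => simp [coeff_zero_eq_constantCoeff]
  | succ m =>
    rw [coeff_succ_X_mul, coeff_succ_X_mul, coeff_succ_X_mul, cD2, coeff_Dop]
    push_cast
    linear_combination rec_C₁ m


theorem X_squared_relation :
    𝒳 ^ 2 - (K - 1) * 𝒳 - PowerSeries.C (R := ℚ) (1 / 4) * (K - 1)
      + PowerSeries.X * (d⁄dX ℚ 𝒳) = 0 := by
  have hc1 : constantCoeff C₁ ≠ 0 := by
    rw [C₁]; simp
  have h1 : C₁ * C₁⁻¹ = 1 := PowerSeries.mul_inv_cancel _ hc1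
  have h2 : (1 - 16 * PowerSeries.X) * K = 1 := by
    rw [K]
    refine PowerSeries.mul_inv_cancel _ ?_
    simp
  have hK : K - 1 = 16 * PowerSeries.X * K := by linear_combination h2
  have hc : (PowerSeries.C (R := ℚ) (1/4)) * 16 = 4 := by
    rw [show (16 : PowerSeries ℚ) = C (R := ℚ) 16 from (map_ofNat (C (R := ℚ)) 16).symm,
      show (4 : PowerSeries ℚ) = C (R := ℚ) 4 from (map_ofNat (C (R := ℚ)) 4).symm, ← map_mul]
    norm_num
  have hD2 : PowerSeries.X * d⁄dX ℚ (PowerSeries.X * d⁄dX ℚ C₁)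
      = K * (16*PowerSeries.X*(PowerSeries.X * d⁄dX ℚ C₁) + 4*PowerSeries.X*C₁) := by
    linear_combination K * ODE_C₁ - (PowerSeries.X * d⁄dX ℚ (PowerSeries.X * d⁄dX ℚ C₁)) * h2
  have hdX : PowerSeries.X * d⁄dX ℚ 𝒳
      = (PowerSeries.X * d⁄dX ℚ (PowerSeries.X * d⁄dX ℚ C₁)) * C₁⁻¹
        - (PowerSeries.X * d⁄dX ℚ C₁)^2 * C₁⁻¹^2 := by
    rw [𝒳, Derivation.leibniz, derivative_inv', smul_eq_mul, smul_eq_mul]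
    ring
  rw [hdX, 𝒳]
  linear_combination C₁⁻¹ * hD2 - ((PowerSeries.X * d⁄dX ℚ C₁) * C₁⁻¹) * hK
    - (PowerSeries.C (R := ℚ) (1/4)) * hK + 4*PowerSeries.X*K*h1 - PowerSeries.X*K*hc
end

section
/- For every real $q$ with $|q|<1/4$, the series $I_0(q)=\sum_{d\ge 0}\binom{2d}{d} q^d$ and $J(q)=\sum_{d\ge 1}\binom{2d}{d}\, H_{2d}\, q^d$ converge, the quotient $J/I_0$ is differentiable on $(-1/4,1/4)$, and the identity $q\,\frac{d}{dq}\Big(\frac{J}{I_0}\Big)(q) = \frac{4q}{1-4q} - \frac{1}{2\sqrt{1-4q}} + \frac{1}{2}$ holds. -/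
open Real

/-- `I₀(q) = ∑_{d ≥ 0} C(2d, d) q^d`. -/
noncomputable def I₀ (q : ℝ) : ℝ := ∑' d : ℕ, (Nat.centralBinom d : ℝ) * q ^ d

/-- `J(q) = ∑_{d ≥ 1} C(2d, d) H_{2d} q^d` (the `d = 0` term vanishes since `H_0 = 0`). -/
noncomputable def J (q : ℝ) : ℝ :=
  ∑' d : ℕ, (Nat.centralBinom d : ℝ) * (harmonic (2 * d) : ℝ) * q ^ d

namespace JIaux

lemma summable_aux (k : ℕ) {t : ℝ} (h0 : 0 ≤ t) (ht : t < 1) :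
    Summable (fun d : ℕ => ((d : ℝ) + 1) ^ k * t ^ d) := by
  rcases eq_or_lt_of_le h0 with h | h
  · apply summable_of_ne_finset_zero (s := {0})
    intro d hd
    simp only [Finset.mem_singleton] at hd
    rw [← h, zero_pow hd, mul_zero]
  · have h1 : Summable (fun d : ℕ => ((d : ℝ)) ^ k * t ^ d) :=
      summable_pow_mul_geometric_of_norm_lt_one k (by rwa [Real.norm_eq_abs, abs_of_pos h])
    have h2 : Summable (fun d : ℕ => (((d + 1 : ℕ)) : ℝ) ^ k * t ^ (d + 1)) :=
      (summable_nat_add_iff 1).2 h1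
    have h3 := h2.mul_right t⁻¹
    refine h3.congr fun d => ?_
    push_cast
    field_simp
    ring

lemma summable_u {ρ : ℝ} (h0 : 0 ≤ ρ) (hρ : ρ < 1 / 4) :
    Summable (fun d : ℕ => (2 * (d : ℝ) + 2) * 4 ^ d * d * ρ ^ (d - 1)) := by
  have h4ρ : (0:ℝ) ≤ 4 * ρ := by linarith
  have h4ρ' : 4 * ρ < 1 := by linarith
  rw [← summable_nat_add_iff 1]
  have base := (summable_aux 2 h4ρ h4ρ').mul_left 16
  refine base.of_nonneg_of_le (fun d => by positivity) fun d => ?_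
  push_cast
  have : (2 * ((d:ℝ) + 1) + 2) * 4 ^ (d+1) * ((d:ℝ)+1) * ρ ^ d
      = 8 * (((d:ℝ)+1) * ((d:ℝ)+2)) * (4*ρ) ^ d := by
    rw [mul_pow]
    ring
  rw [this]
  have hle : ((d:ℝ)+1) * ((d:ℝ)+2) ≤ 2 * ((d:ℝ)+1)^2 := by nlinarith [Nat.cast_nonneg (α := ℝ) d]
  have hp : (0:ℝ) ≤ (4*ρ)^d := by positivity
  nlinarith [mul_le_mul_of_nonneg_right hle hp]




variable {c : ℕ → ℝ} {x : ℝ}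

lemma norm_term_le (hc : ∀ d, |c d| ≤ (2 * d + 2) * 4 ^ d) {y : ℝ} {ρ : ℝ} (hy : |y| ≤ ρ) (d : ℕ) :
    ‖c d * ((d : ℝ) * y ^ (d - 1))‖ ≤ (2 * (d : ℝ) + 2) * 4 ^ d * d * ρ ^ (d - 1) := by
  have h0 : (0:ℝ) ≤ ρ := le_trans (abs_nonneg y) hy
  have h1 : |y| ^ (d-1) ≤ ρ ^ (d-1) := pow_le_pow_left₀ (abs_nonneg y) hy _
  have h2 := hc d
  calc ‖c d * ((d : ℝ) * y ^ (d - 1))‖ = |c d| * ((d:ℝ) * |y| ^ (d-1)) := by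
        rw [norm_mul, Real.norm_eq_abs, Real.norm_eq_abs, abs_mul, abs_pow, Nat.abs_cast]
    _ ≤ ((2 * (d:ℝ) + 2) * 4 ^ d) * ((d:ℝ) * ρ ^ (d-1)) := by
        apply mul_le_mul h2 _ (by positivity) (by positivity)
        exact mul_le_mul_of_nonneg_left h1 (Nat.cast_nonneg d)
    _ = (2 * (d : ℝ) + 2) * 4 ^ d * d * ρ ^ (d - 1) := by ring

lemma summable_coeff (hc : ∀ d, |c d| ≤ (2 * d + 2) * 4 ^ d) (hx : |x| < 1 / 4) :
    Summable fun d : ℕ => c d * x ^ d := by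
  have h4 : (0:ℝ) ≤ 4 * |x| := by positivity
  have h4' : 4 * |x| < 1 := by have := abs_nonneg x; linarith
  refine Summable.of_norm_bounded ((summable_aux 1 h4 h4').mul_left 2) fun d => ?_
  have h2 := hc d
  calc ‖c d * x ^ d‖ = |c d| * |x| ^ d := by rw [norm_mul, Real.norm_eq_abs, Real.norm_eq_abs, abs_pow]
    _ ≤ ((2 * (d:ℝ) + 2) * 4 ^ d) * |x| ^ d :=
        mul_le_mul_of_nonneg_right h2 (by positivity)
    _ = 2 * (((d:ℝ) + 1) ^ 1 * (4 * |x|) ^ d) := by rw [mul_pow]; ring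

lemma summable_dcoeff (hc : ∀ d, |c d| ≤ (2 * d + 2) * 4 ^ d) (hx : |x| < 1 / 4) :
    Summable fun d : ℕ => c d * ((d : ℝ) * x ^ (d - 1)) :=
  Summable.of_norm_bounded (summable_u (abs_nonneg x) hx)
    (norm_term_le hc le_rfl)

lemma hasDerivAt_tsum_coeff (hc : ∀ d, |c d| ≤ (2 * d + 2) * 4 ^ d) (hx : |x| < 1 / 4) :
    HasDerivAt (fun y => ∑' d : ℕ, c d * y ^ d) (∑' d : ℕ, c d * ((d : ℝ) * x ^ (d - 1))) x := by
  set ρ : ℝ := (|x| + 1/4) / 2 with hρdef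
  have hxρ : |x| < ρ := by have := abs_nonneg x; rw [hρdef]; linarith
  have hρ4 : ρ < 1/4 := by rw [hρdef]; linarith
  have hρ0 : 0 ≤ ρ := le_trans (abs_nonneg x) hxρ.le
  refine hasDerivAt_tsum_of_isPreconnected (summable_u hρ0 hρ4) isOpen_Ioo
    (convex_Ioo (-ρ) ρ).isPreconnected
    (fun n y _ => ((hasDerivAt_pow n y).const_mul (c n)))
    (fun n y hy => norm_term_le hc (abs_le.2 ⟨(Set.mem_Ioo.1 hy).1.le, (Set.mem_Ioo.1 hy).2.le⟩) n)
    (abs_lt.1 hxρ |> fun h => Set.mem_Ioo.2 h)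
    (summable_coeff hc hx)
    (Set.mem_Ioo.2 (abs_lt.1 hxρ))

noncomputable def ac (d : ℕ) : ℝ := Nat.centralBinom d
noncomputable def bc (d : ℕ) : ℝ := Nat.centralBinom d * harmonic (2 * d)

lemma centralBinom_le_four_pow (d : ℕ) : (Nat.centralBinom d : ℝ) ≤ 4 ^ d := by
  have h : Nat.centralBinom d ≤ 2 ^ (2 * d) := by
    rw [Nat.centralBinom, ← Nat.sum_range_choose (2 * d)]
    exact Finset.single_le_sum (fun i _ => Nat.zero_le _)
      (Finset.mem_range.2 (by omega))
  calc (Nat.centralBinom d : ℝ) ≤ (2 : ℝ) ^ (2 * d) := by exact_mod_cast h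
    _ = 4 ^ d := by rw [pow_mul]; norm_num

lemma harmonic_le_self (n : ℕ) : (harmonic n : ℝ) ≤ n := by
  induction n with
  | zero => simp
  | succ n ih =>
    rw [harmonic_succ]
    push_cast
    have : ((n:ℝ) + 1)⁻¹ ≤ 1 := by
      rw [inv_le_one_iff₀]; right; linarith [Nat.cast_nonneg (α := ℝ) n]
    linarith

lemma ac_nonneg (d : ℕ) : 0 ≤ ac d := Nat.cast_nonneg _
lemma harmonic_nonneg' (n : ℕ) : (0:ℝ) ≤ (harmonic n : ℝ) := by
  rcases Nat.eq_zero_or_pos n with h | h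
  · simp [h]
  · exact_mod_cast (harmonic_pos h.ne').le

lemma bc_nonneg (d : ℕ) : 0 ≤ bc d :=
  mul_nonneg (Nat.cast_nonneg _) (harmonic_nonneg' _)

lemma ac_bound (d : ℕ) : |ac d| ≤ (2 * d + 2) * 4 ^ d := by
  rw [abs_of_nonneg (ac_nonneg d)]
  have h1 := centralBinom_le_four_pow d
  have h2 : (1:ℝ) ≤ 2 * (d:ℝ) + 2 := by linarith [Nat.cast_nonneg (α := ℝ) d]
  have h3 : (0:ℝ) ≤ (4:ℝ)^d := by positivity
  calc ac d ≤ 4 ^ d := h1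
    _ = 1 * 4 ^ d := (one_mul _).symm
    _ ≤ (2 * d + 2) * 4 ^ d := mul_le_mul_of_nonneg_right h2 h3

lemma bc_bound (d : ℕ) : |bc d| ≤ (2 * d + 2) * 4 ^ d := by
  rw [abs_of_nonneg (bc_nonneg d)]
  have h1 := centralBinom_le_four_pow d
  have h2 : (harmonic (2*d) : ℝ) ≤ 2 * d + 2 := by
    have := harmonic_le_self (2 * d); push_cast at this ⊢; linarith
  have h3 : (0:ℝ) ≤ (harmonic (2*d) : ℝ) := harmonic_nonneg' _
  calc bc d = (Nat.centralBinom d : ℝ) * (harmonic (2*d) : ℝ) := rfl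
    _ ≤ 4 ^ d * (2 * d + 2) := mul_le_mul h1 h2 h3 (by positivity)
    _ = (2 * d + 2) * 4 ^ d := by ring

lemma a_rec (d : ℕ) : ((d:ℝ) + 1) * ac (d + 1) = (4 * d + 2) * ac d := by
  have h := Nat.succ_mul_centralBinom_succ d
  have : ((d + 1) * Nat.centralBinom (d + 1) : ℝ) = (2 * (2 * d + 1) * Nat.centralBinom d : ℝ) := by
    exact_mod_cast congrArg (Nat.cast : ℕ → ℝ) h
  unfold ac
  push_cast at this ⊢
  linarith

lemma b_rec (d : ℕ) :
    ((d:ℝ) + 1) * bc (d + 1) - (4 * d + 2) * bc d = ac (d + 1) / 2 + 2 * ac d := by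
  have hH : (harmonic (2 * (d + 1)) : ℝ)
      = (harmonic (2 * d) : ℝ) + (2 * (d:ℝ) + 1)⁻¹ + (2 * (d:ℝ) + 2)⁻¹ := by
    have e : 2 * (d + 1) = (2 * d + 1) + 1 := by ring
    rw [e, harmonic_succ, harmonic_succ]
    push_cast
    ring
  have ha := a_rec d
  have hd1 : ((d:ℝ) + 1) ≠ 0 := by positivity
  have h21 : (2 * (d:ℝ) + 1) ≠ 0 := by positivity
  have h22 : (2 * (d:ℝ) + 2) ≠ 0 := by positivity
  have hbc1 : bc (d + 1) = ac (d + 1) * (harmonic (2 * (d+1)) : ℝ) := rfl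
  have hbc0 : bc d = ac d * (harmonic (2 * d) : ℝ) := rfl
  rw [hbc1, hbc0, hH]
  have hac : ac (d + 1) = (4 * d + 2) * ac d / ((d:ℝ) + 1) := by
    field_simp
    linarith [ha]
  rw [hac]
  field_simp
  ring

lemma x_mul_deriv_term (x : ℝ) (d : ℕ) : x * ((d:ℝ) * x ^ (d - 1)) = (d:ℝ) * x ^ d := by
  cases d with
  | zero => simp
  | succ n => push_cast; rw [pow_succ]; ring

lemma ac_zero : ac 0 = 1 := by unfold ac; norm_num [Nat.centralBinom_zero]

lemma bc_zero : bc 0 = 0 := by unfold bc; norm_num [harmonic_zero]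

section ODE

variable {x : ℝ} (hx : |x| < 1 / 4)

set_option maxHeartbeats 1000000 in
lemma ode_A (hx : |x| < 1 / 4) :
    (1 - 4 * x) * (∑' d : ℕ, ac d * ((d:ℝ) * x ^ (d - 1))) = 2 * (∑' d : ℕ, ac d * x ^ d) := by
  set A : ℝ := ∑' d : ℕ, ac d * x ^ d with hA_def
  set A' : ℝ := ∑' d : ℕ, ac d * ((d:ℝ) * x ^ (d - 1)) with hA'_def
  have hA : HasSum (fun d : ℕ => ac d * x ^ d) A := (summable_coeff ac_bound hx).hasSum
  have hA' : HasSum (fun d : ℕ => ac d * ((d:ℝ) * x ^ (d - 1))) A' :=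
    (summable_dcoeff ac_bound hx).hasSum
  -- shifted version of hA'
  have h1 : HasSum (fun d : ℕ => ((d:ℝ) + 1) * ac (d + 1) * x ^ d) A' := by
    have h := (hasSum_nat_add_iff' (f := fun d : ℕ => ac d * ((d:ℝ) * x ^ (d - 1))) 1).2 hA'
    simp only [Finset.range_one, Finset.sum_singleton, Nat.cast_zero, zero_mul, mul_zero,
      sub_zero] at h
    refine h.congr_fun fun d => ?_
    push_cast
    ring
  -- 4*d*ac d*x^d sums to 4*x*A'
  have h2 : HasSum (fun d : ℕ => 4 * (d:ℝ) * ac d * x ^ d) (4 * x * A') := by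
    rw [← hasSum_nat_add_iff' 1]
    simp only [Finset.range_one, Finset.sum_singleton, Nat.cast_zero, mul_zero, zero_mul,
      pow_zero, mul_one, sub_zero]
    refine (h1.mul_left (4 * x)).congr_fun fun d => ?_
    push_cast
    rw [pow_succ]
    ring
  have h3 : HasSum (fun d : ℕ => 2 * ac d * x ^ d) (A' - 4 * x * A') := by
    refine (h1.sub h2).congr_fun fun d => ?_
    have h := a_rec d
    linear_combination (-(x ^ d)) * h
  have hA2 : HasSum (fun d : ℕ => 2 * ac d * x ^ d) (2 * A) :=
    (hA.mul_left 2).congr_fun fun d => by ring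
  have h4 := h3.unique hA2
  linarith [h4]

set_option maxHeartbeats 1000000 in
lemma ode_B (hx : |x| < 1 / 4) :
    x * (∑' d : ℕ, bc d * ((d:ℝ) * x ^ (d - 1)))
      - 4 * (x * (x * (∑' d : ℕ, bc d * ((d:ℝ) * x ^ (d - 1)))))
      - 2 * x * (∑' d : ℕ, bc d * x ^ d)
    = 2⁻¹ * (∑' d : ℕ, ac d * x ^ d) - 2⁻¹ + 2 * x * (∑' d : ℕ, ac d * x ^ d) := by
  set A : ℝ := ∑' d : ℕ, ac d * x ^ d with hA_def
  set B : ℝ := ∑' d : ℕ, bc d * x ^ d with hB_def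
  set B' : ℝ := ∑' d : ℕ, bc d * ((d:ℝ) * x ^ (d - 1)) with hB'_def
  have hA : HasSum (fun d : ℕ => ac d * x ^ d) A := (summable_coeff ac_bound hx).hasSum
  have hB : HasSum (fun d : ℕ => bc d * x ^ d) B := (summable_coeff bc_bound hx).hasSum
  have hB' : HasSum (fun d : ℕ => bc d * ((d:ℝ) * x ^ (d - 1))) B' :=
    (summable_dcoeff bc_bound hx).hasSum
  have P : HasSum (fun d : ℕ => (d:ℝ) * bc d * x ^ d) (x * B') := by
    refine (hB'.mul_left x).congr_fun fun d => ?_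
    rw [show x * (bc d * ((d:ℝ) * x ^ (d - 1))) = bc d * (x * ((d:ℝ) * x ^ (d-1))) by ring,
      x_mul_deriv_term]
    ring
  have Pshift : HasSum (fun d : ℕ => ((d:ℝ) + 1) * bc (d + 1) * x ^ (d + 1)) (x * B') := by
    have h := (hasSum_nat_add_iff' (f := fun d : ℕ => (d:ℝ) * bc d * x ^ d) 1).2 P
    simp only [Finset.range_one, Finset.sum_singleton, Nat.cast_zero, zero_mul, sub_zero] at h
    refine h.congr_fun fun d => ?_
    push_cast
    ring
  have Q : HasSum (fun d : ℕ => 4 * (d:ℝ) * bc d * x ^ (d + 1)) (4 * (x * (x * B'))) := by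
    refine ((P.mul_left x).mul_left 4).congr_fun fun d => ?_
    rw [pow_succ]
    ring
  have R : HasSum (fun d : ℕ => 2 * bc d * x ^ (d + 1)) (2 * x * B) := by
    refine (hB.mul_left (2 * x)).congr_fun fun d => ?_
    rw [pow_succ]
    ring
  have L : HasSum (fun d : ℕ => (ac (d+1) / 2 + 2 * ac d) * x ^ (d + 1))
      (x * B' - 4 * (x * (x * B')) - 2 * x * B) := by
    refine ((Pshift.sub Q).sub R).congr_fun fun d => ?_
    have hb := b_rec d
    linear_combination (-(x ^ (d+1))) * hb
  have S1 : HasSum (fun d : ℕ => ac (d+1) / 2 * x ^ (d + 1)) (2⁻¹ * A - 2⁻¹) := by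
    have h := (hasSum_nat_add_iff' (f := fun d : ℕ => 2⁻¹ * (ac d * x ^ d)) 1).2 (hA.mul_left 2⁻¹)
    simp only [Finset.range_one, Finset.sum_singleton, pow_zero, mul_one, ac_zero] at h
    refine h.congr_fun fun d => ?_
    ring
  have S2 : HasSum (fun d : ℕ => 2 * ac d * x ^ (d + 1)) (2 * x * A) := by
    refine (hA.mul_left (2 * x)).congr_fun fun d => ?_
    rw [pow_succ]
    ring
  have S : HasSum (fun d : ℕ => (ac (d+1) / 2 + 2 * ac d) * x ^ (d + 1))
      (2⁻¹ * A - 2⁻¹ + 2 * x * A) := by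
    refine (S1.add S2).congr_fun fun d => ?_
    ring
  exact L.unique S

end ODE

section Main

lemma mem_U_iff {x : ℝ} : x ∈ Set.Ioo (-(1/4) : ℝ) (1/4) ↔ |x| < 1/4 := by
  rw [Set.mem_Ioo, abs_lt]

lemma eq_of_deriv_zero {f : ℝ → ℝ}
    (h : ∀ y ∈ Set.Ioo (-(1/4) : ℝ) (1/4), HasDerivAt f 0 y)
    {x : ℝ} (hx : x ∈ Set.Ioo (-(1/4) : ℝ) (1/4)) : f x = f 0 := by
  obtain ⟨hx1, hx2⟩ := hx
  rcases le_total 0 x with hle | hle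
  · refine constant_of_has_deriv_right_zero (f := f) (a := 0) (b := x) ?_ ?_ x
      (Set.mem_Icc.2 ⟨hle, le_refl x⟩)
    · intro y hy
      exact ((h y ⟨by linarith [hy.1], by linarith [hy.2]⟩).continuousAt).continuousWithinAt
    · intro y hy
      exact (h y ⟨by linarith [hy.1], by linarith [hy.2]⟩).hasDerivWithinAt
  · have key := constant_of_has_deriv_right_zero (f := f) (a := x) (b := 0) ?_ ?_ 0
      (Set.mem_Icc.2 ⟨hle, le_refl 0⟩)
    · exact key.symm
    · intro y hy
      exact ((h y ⟨by linarith [hy.1], by linarith [hy.2]⟩).continuousAt).continuousWithinAt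
    · intro y hy
      exact (h y ⟨by linarith [hy.1], by linarith [hy.2]⟩).hasDerivWithinAt

lemma hasDerivAt_one_sub (y : ℝ) : HasDerivAt (fun z : ℝ => 1 - 4 * z) (-4) y := by
  have h := ((hasDerivAt_id y).const_mul (4:ℝ)).const_sub 1
  simpa using h

lemma hasDerivAt_sqrt_lin {y : ℝ} (hy : y < 1/4) :
    HasDerivAt (fun z : ℝ => Real.sqrt (1 - 4 * z)) (-2 / Real.sqrt (1 - 4 * y)) y := by
  have h1 : (0:ℝ) < 1 - 4 * y := by linarith
  have h := (Real.hasDerivAt_sqrt h1.ne').comp y (hasDerivAt_one_sub y)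
  refine h.congr_deriv ?_
  have hs : 0 < Real.sqrt (1 - 4 * y) := Real.sqrt_pos.2 h1
  ring

lemma hasDerivAt_G {y : ℝ} (hy : |y| < 1/4) :
    HasDerivAt (fun z => Real.log (1 + Real.sqrt (1 - 4 * z)) - Real.log 2 - Real.log (1 - 4 * z))
      ((1 + Real.sqrt (1 - 4 * y))⁻¹ * (-2 / Real.sqrt (1 - 4 * y)) - (1 - 4 * y)⁻¹ * (-4)) y := by
  obtain ⟨hy1, hy2⟩ := abs_lt.1 hy
  have h1 : (0:ℝ) < 1 - 4 * y := by linarith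
  have hs : 0 < Real.sqrt (1 - 4 * y) := Real.sqrt_pos.2 h1
  have h1plus : (0:ℝ) < 1 + Real.sqrt (1 - 4 * y) := by linarith
  have hlog1 : HasDerivAt (fun z => Real.log (1 + Real.sqrt (1 - 4 * z)))
      ((1 + Real.sqrt (1 - 4 * y))⁻¹ * (-2 / Real.sqrt (1 - 4 * y))) y :=
    by have h := (Real.hasDerivAt_log h1plus.ne').comp y ((hasDerivAt_sqrt_lin hy2).const_add 1); exact h
  have hlog2 : HasDerivAt (fun z => Real.log (1 - 4 * z)) ((1 - 4 * y)⁻¹ * (-4)) y :=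
    by have h := (Real.hasDerivAt_log h1.ne').comp y (hasDerivAt_one_sub y); exact h
  exact (hlog1.sub_const (Real.log 2)).sub hlog2

lemma sqrt_mul_tsum_ac {x : ℝ} (hx : |x| < 1/4) :
    Real.sqrt (1 - 4 * x) * (∑' d : ℕ, ac d * x ^ d) = 1 := by
  have key : ∀ y ∈ Set.Ioo (-(1/4) : ℝ) (1/4),
      HasDerivAt (fun z => Real.sqrt (1 - 4 * z) * (∑' d : ℕ, ac d * z ^ d)) 0 y := by
    intro y hy
    have hy' : |y| < 1/4 := mem_U_iff.1 hy
    obtain ⟨hy1, hy2⟩ := abs_lt.1 hy'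
    have h1 : (0:ℝ) < 1 - 4 * y := by linarith
    have hs : 0 < Real.sqrt (1 - 4 * y) := Real.sqrt_pos.2 h1
    have hss : Real.sqrt (1 - 4 * y) * Real.sqrt (1 - 4 * y) = 1 - 4 * y :=
      Real.mul_self_sqrt h1.le
    have hmul := (hasDerivAt_sqrt_lin hy2).mul (hasDerivAt_tsum_coeff ac_bound hy')
    refine hmul.congr_deriv (Eq.symm ?_)
    set s := Real.sqrt (1 - 4 * y) with hsdef
    set A := ∑' d : ℕ, ac d * y ^ d with hAdef
    set A' := ∑' d : ℕ, ac d * ((d:ℝ) * y ^ (d - 1)) with hA'def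
    have hode := ode_A hy'
    have e1 : s * (-2 / s * A + s * A') = -2 * A + (s * s) * A' := by
      field_simp
    rw [hss] at e1
    have e2 : s * (-2 / s * A + s * A') = 0 := by rw [e1]; linarith [hode]
    rcases mul_eq_zero.1 e2 with h | h
    · exact absurd h hs.ne'
    · exact h.symm
  have h0 := eq_of_deriv_zero key (mem_U_iff.2 hx)
  rw [h0]
  have hts : (∑' d : ℕ, ac d * (0:ℝ) ^ d) = 1 := by
    rw [tsum_eq_single 0 (fun d hd => by rw [zero_pow hd, mul_zero])]
    simp [ac_zero]
  rw [hts]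
  norm_num

lemma bc_one : bc 1 = 3 := by
  have h2 : (harmonic 2 : ℚ) = 3/2 := by
    rw [show (2:ℕ) = 1 + 1 from rfl, harmonic_succ, show (1:ℕ) = 0 + 1 from rfl,
      harmonic_succ, harmonic_zero]
    norm_num
  unfold bc
  rw [show 2 * 1 = 2 from rfl, h2, show Nat.centralBinom 1 = 2 by decide]
  push_cast
  norm_num

set_option maxHeartbeats 1000000 in
lemma sqrt_mul_tsum_bc {x : ℝ} (hx : |x| < 1/4) :
    Real.sqrt (1 - 4 * x) * (∑' d : ℕ, bc d * x ^ d)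
      = Real.log (1 + Real.sqrt (1 - 4 * x)) - Real.log 2 - Real.log (1 - 4 * x) := by
  have key : ∀ y ∈ Set.Ioo (-(1/4) : ℝ) (1/4),
      HasDerivAt (fun z => Real.sqrt (1 - 4 * z) * (∑' d : ℕ, bc d * z ^ d)
        - (Real.log (1 + Real.sqrt (1 - 4 * z)) - Real.log 2 - Real.log (1 - 4 * z))) 0 y := by
    intro y hy
    have hy' : |y| < 1/4 := mem_U_iff.1 hy
    obtain ⟨hy1, hy2⟩ := abs_lt.1 hy'
    have h1 : (0:ℝ) < 1 - 4 * y := by linarith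
    have hs : 0 < Real.sqrt (1 - 4 * y) := Real.sqrt_pos.2 h1
    have h1plus : (0:ℝ) < 1 + Real.sqrt (1 - 4 * y) := by linarith
    have hss : Real.sqrt (1 - 4 * y) * Real.sqrt (1 - 4 * y) = 1 - 4 * y :=
      Real.mul_self_sqrt h1.le
    have hK := ((hasDerivAt_sqrt_lin hy2).mul (hasDerivAt_tsum_coeff bc_bound hy')).sub
      (hasDerivAt_G hy')
    refine hK.congr_deriv (Eq.symm ?_)
    set s := Real.sqrt (1 - 4 * y) with hsdef
    set B := ∑' d : ℕ, bc d * y ^ d with hBdef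
    set B' := ∑' d : ℕ, bc d * ((d:ℝ) * y ^ (d - 1)) with hB'def
    set A := ∑' d : ℕ, ac d * y ^ d with hAdef
    have hsa : s * A = 1 := sqrt_mul_tsum_ac hy'
    have hode := ode_B hy'
    have hstep : (1 - 4 * y) * (y * B') = 2 * y * B + 2⁻¹ * A - 2⁻¹ + 2 * y * A := by
      linear_combination hode
    set E := -2 / s * B + s * B' - ((1 + s)⁻¹ * (-2 / s) - (1 - 4 * y)⁻¹ * (-4)) with hEdef
    have e1 : E * (s * (1 + s) * (1 - 4 * y) * y)
        = -2 * B * (1 + s) * (1 - 4 * y) * y + s * s * (1 + s) * ((1 - 4 * y) * (y * B'))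
          + 2 * (1 - 4 * y) * y - 4 * s * (1 + s) * y := by
      rw [hEdef]
      field_simp
      ring
    rw [hstep] at e1
    have e3 : -2 * B * (1 + s) * (1 - 4 * y) * y
          + s * s * (1 + s) * (2 * y * B + 2⁻¹ * A - 2⁻¹ + 2 * y * A)
          + 2 * (1 - 4 * y) * y - 4 * s * (1 + s) * y = 0 := by
      linear_combination ((1 + s) * (2 * y * B + 2⁻¹ * A - 2⁻¹ + 2 * y * A)
          - (1 + s) * (2⁻¹ + 2 * y) * A + 2⁻¹ - 2 * y) * hss
        + ((1 + s) * (2⁻¹ + 2 * y) * s) * hsa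
    rw [e3] at e1
    rcases eq_or_ne y 0 with hy0 | hy0
    · -- y = 0 : direct computation
      subst hy0
      have hs1 : s = 1 := by rw [hsdef]; norm_num
      have hB'0 : B' = 3 := by
        rw [hB'def]
        rw [tsum_eq_single 1 ?_]
        · norm_num [bc_one]
        · intro d hd
          match d with
          | 0 => norm_num
          | (n+1) =>
            have hn : n ≠ 0 := by omega
            simp [zero_pow hn]
      have hB0 : B = 0 := by
        rw [hBdef, tsum_eq_single 0 (fun d hd => by rw [zero_pow hd, mul_zero])]
        simp [bc_zero]
      rw [hEdef] at *
      rw [hs1, hB'0, hB0]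
      norm_num
    · have hD : s * (1 + s) * (1 - 4 * y) * y ≠ 0 := by
        apply mul_ne_zero (mul_ne_zero (mul_ne_zero hs.ne' h1plus.ne') h1.ne') hy0
      have := (mul_eq_zero.1 e1).resolve_right hD
      exact this.symm
  have h0 := eq_of_deriv_zero key (mem_U_iff.2 hx)
  have hts : (∑' d : ℕ, bc d * (0:ℝ) ^ d) = 0 := by
    rw [tsum_eq_single 0 (fun d hd => by rw [zero_pow hd, mul_zero])]
    simp [bc_zero]
  rw [hts] at h0
  norm_num [Real.sqrt_one] at h0
  linarith [h0]

end Main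

end JIaux

namespace JIaux

lemma JI_eq {x : ℝ} (hx : |x| < 1/4) :
    J x / I₀ x = Real.log (1 + Real.sqrt (1 - 4 * x)) - Real.log 2 - Real.log (1 - 4 * x) := by
  have h1 : (0:ℝ) < 1 - 4 * x := by have := (abs_lt.1 hx).2; linarith
  have hs : 0 < Real.sqrt (1 - 4 * x) := Real.sqrt_pos.2 h1
  have hI : Real.sqrt (1 - 4 * x) * I₀ x = 1 := sqrt_mul_tsum_ac hx
  have hJ : Real.sqrt (1 - 4 * x) * J x
      = Real.log (1 + Real.sqrt (1 - 4 * x)) - Real.log 2 - Real.log (1 - 4 * x) :=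
    sqrt_mul_tsum_bc hx
  have hI0 : I₀ x = (Real.sqrt (1 - 4 * x))⁻¹ := eq_inv_of_mul_eq_one_left (by
    rw [mul_comm]; exact hI)
  rw [hI0, div_inv_eq_mul, mul_comm]
  exact hJ

end JIaux

theorem J_over_I0_deriv (q : ℝ) (hq : |q| < 1 / 4) :
    Summable (fun d : ℕ => (Nat.centralBinom d : ℝ) * q ^ d) ∧
    Summable (fun d : ℕ => (Nat.centralBinom d : ℝ) * (harmonic (2 * d) : ℝ) * q ^ d) ∧
    DifferentiableOn ℝ (fun x => J x / I₀ x) (Set.Ioo (-(1 / 4)) (1 / 4)) ∧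
    q * deriv (fun x => J x / I₀ x) q
      = 4 * q / (1 - 4 * q) - 1 / (2 * Real.sqrt (1 - 4 * q)) + 1 / 2 := by
  have hqU : q ∈ Set.Ioo (-(1/4) : ℝ) (1/4) := JIaux.mem_U_iff.2 hq
  refine ⟨JIaux.summable_coeff JIaux.ac_bound hq, JIaux.summable_coeff JIaux.bc_bound hq, ?_, ?_⟩
  · refine DifferentiableOn.congr
      (f := fun x => Real.log (1 + Real.sqrt (1 - 4 * x)) - Real.log 2 - Real.log (1 - 4 * x))
      ?_ ?_
    · intro x hx
      exact (JIaux.hasDerivAt_G (JIaux.mem_U_iff.1 hx)).differentiableAt.differentiableWithinAt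
    · intro x hx
      exact JIaux.JI_eq (JIaux.mem_U_iff.1 hx)
  · have heq : (fun x => J x / I₀ x) =ᶠ[nhds q]
        (fun x => Real.log (1 + Real.sqrt (1 - 4 * x)) - Real.log 2 - Real.log (1 - 4 * x)) := by
      filter_upwards [isOpen_Ioo.mem_nhds hqU] with x hx
      exact JIaux.JI_eq (JIaux.mem_U_iff.1 hx)
    rw [heq.deriv_eq, (JIaux.hasDerivAt_G hq).deriv]
    set s := Real.sqrt (1 - 4 * q) with hsdef
    have h1 : (0:ℝ) < 1 - 4 * q := by have := (abs_lt.1 hq).2; linarith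
    have hs : 0 < s := Real.sqrt_pos.2 h1
    have h1p : (0:ℝ) < 1 + s := by linarith
    have hss : s * s = 1 - 4 * q := Real.mul_self_sqrt h1.le
    have key : q * ((1 + s)⁻¹ * (-2 / s) - (1 - 4 * q)⁻¹ * (-4))
          - (4 * q / (1 - 4 * q) - 1 / (2 * s) + 1 / 2)
        = (s * s - (1 - 4 * q)) * (-(2 * s * (1 + s))⁻¹) := by
      field_simp
      ring
    rw [hss, sub_self, zero_mul] at key
    linarith [key]
end

section
/- Let $n\ge 2$ be an integer, fix a real $q$ with $0<q<1/4$, and fix pairwise distinct nonzero reals $\mu_1,\dots,\mu_n$. For $t>0$ set $\lambda_i = t\mu_i$ and, writing $L^{\pm}(\lambda,q)=\frac{2\lambda n q\pm\sqrt{1-4q+\lambda^2 n^2 q}}{1-4q}$, define $G(t)=\sum_{i=1}^{n}\Big(-\frac{1}{2}-\sum_{j\ne i}\frac{1}{\lambda_i-\lambda_j}+\frac{1}{2+n\lambda_i}\Big)\big(L^{+}(\lambda_i,q)-1\big)+\sum_{i=1}^{n}\Big(\frac{1}{2}-\sum_{j\ne i}\frac{1}{\lambda_i-\lambda_j}+\frac{1}{-2+n\lambda_i}\Big)\big(L^{-}(\lambda_i,q)+1\big)$.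 Then there is $t_0>0$ such that $G(t)$ is defined for all $0<t<t_0$, and $\lim_{t\to 0^{+}} G(t) = -\,2n^2(n-1)\,\frac{q}{1-4q}.$ -/
open Real Filter Finset

lemma sum_mu_ratio (n : ℕ) (hn : 1 ≤ n) (μ : Fin n → ℝ) (hinj : Function.Injective μ) :
    ∑ i : Fin n, ∑ j ∈ Finset.univ.erase i, μ i / (μ i - μ j) = n * (n - 1) / 2 := by
  have hne : ∀ i j : Fin n, j ≠ i → μ i - μ j ≠ 0 := by
    intro i j h
    exact sub_ne_zero.mpr (fun e => h (hinj e.symm))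
  set S := ∑ i : Fin n, ∑ j ∈ Finset.univ.erase i, μ i / (μ i - μ j) with hS
  have hswap : ∑ i : Fin n, ∑ j ∈ Finset.univ.erase i, μ j / (μ j - μ i) = S := by
    rw [hS]
    rw [Finset.sum_comm' (s := Finset.univ) (t := fun i => Finset.univ.erase i)
      (t' := Finset.univ) (s' := fun j => Finset.univ.erase j)
      (by intro i j; simp [Finset.mem_erase]; tauto)]
  have h2 : S + S = n * (n - 1) := by
    nth_rewrite 2 [← hswap]
    rw [hS, ← Finset.sum_add_distrib]
    have key : ∀ i : Fin n, ((∑ j ∈ Finset.univ.erase i, μ i / (μ i - μ j)) + (∑ j ∈ Finset.univ.erase i, μ j / (μ j - μ i))) = (n - 1 : ℝ) := by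
      intro i
      rw [← Finset.sum_add_distrib]
      have h1 : ∀ j ∈ Finset.univ.erase i, μ i / (μ i - μ j) + μ j / (μ j - μ i) = 1 := by
        intro j hj
        have hj' : j ≠ i := (Finset.mem_erase.mp hj).1
        have ha := hne i j hj'
        have hb : μ j - μ i ≠ 0 := fun e => ha (by linarith [sub_eq_zero.mp e])
        field_simp
        ring
      rw [Finset.sum_congr rfl h1, Finset.sum_const, Finset.card_erase_of_mem (Finset.mem_univ i)]
      simp
      rw [Nat.cast_sub hn]
      simp
    rw [Finset.sum_congr rfl (fun i _ => key i), Finset.sum_const]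
    simp
  linarith

theorem vertex_contribution_limit (n : ℕ) (hn : 2 ≤ n) (q : ℝ)
    (hq : q ∈ Set.Ioo (0 : ℝ) (1 / 4))
    (μ : Fin n → ℝ) (hinj : Function.Injective μ) (hne : ∀ i, μ i ≠ 0)
    (G : ℝ → ℝ)
    (hG : ∀ t : ℝ, G t =
      (∑ i : Fin n,
        (-(1 / 2) - (∑ j ∈ Finset.univ.erase i, 1 / (t * μ i - t * μ j))
            + 1 / (2 + n * (t * μ i))) *
          ((2 * (t * μ i) * n * q
              + Real.sqrt (1 - 4 * q + (t * μ i) ^ 2 * n ^ 2 * q)) / (1 - 4 * q) - 1))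
      + ∑ i : Fin n,
        ((1 / 2) - (∑ j ∈ Finset.univ.erase i, 1 / (t * μ i - t * μ j))
            + 1 / (-2 + n * (t * μ i))) *
          ((2 * (t * μ i) * n * q
              - Real.sqrt (1 - 4 * q + (t * μ i) ^ 2 * n ^ 2 * q)) / (1 - 4 * q) + 1)) :
    ∃ t0 > (0 : ℝ),
      (∀ t : ℝ, 0 < t → t < t0 →
        (∀ i : Fin n, 2 + n * (t * μ i) ≠ 0 ∧ -2 + n * (t * μ i) ≠ 0) ∧
        (∀ i j : Fin n, i ≠ j → t * μ i ≠ t * μ j)) ∧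
      Tendsto G (nhdsWithin 0 (Set.Ioi 0))
        (nhds (-2 * n ^ 2 * ((n : ℝ) - 1) * q / (1 - 4 * q))) := by
  obtain ⟨hq1, hq2⟩ := hq
  have hD : (0:ℝ) < 1 - 4 * q := by linarith
  have hD' : (1:ℝ) - 4 * q ≠ 0 := ne_of_gt hD
  haveI : Nonempty (Fin n) := ⟨⟨0, by omega⟩⟩
  have hnR : (0:ℝ) < n := by positivity
  set M : ℝ := Finset.univ.sup' Finset.univ_nonempty (fun i => |μ i|) with hMdef
  have hM : 0 < M :=
    lt_of_lt_of_le (abs_pos.mpr (hne ⟨0, by omega⟩))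
      (Finset.le_sup' (fun i => |μ i|) (Finset.mem_univ (⟨0, by omega⟩ : Fin n)))
  set t0 : ℝ := 1 / (n * M) with ht0def
  have ht0 : 0 < t0 := by positivity
  have hbound : ∀ t : ℝ, 0 < t → t < t0 → ∀ i : Fin n, |(n:ℝ) * (t * μ i)| < 1 := by
    intro t ht htl i
    have h1 : |(n:ℝ) * (t * μ i)| = (n:ℝ) * t * |μ i| := by
      rw [abs_mul, abs_mul, Nat.abs_cast, abs_of_pos ht]; ring
    rw [h1]
    have h2 : (n:ℝ) * t * |μ i| ≤ (n:ℝ) * t * M :=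
      mul_le_mul_of_nonneg_left (Finset.le_sup' (fun i => |μ i|) (Finset.mem_univ i)) (by positivity)
    have h3 : (n:ℝ) * t * M < (n:ℝ) * t0 * M := by
      apply mul_lt_mul_of_pos_right _ hM
      exact mul_lt_mul_of_pos_left htl hnR
    have h4 : (n:ℝ) * t0 * M = 1 := by
      rw [ht0def]; field_simp
    linarith
  have hdenoms : ∀ t : ℝ, 0 < t → t < t0 →
      (∀ i : Fin n, 2 + n * (t * μ i) ≠ 0 ∧ -2 + n * (t * μ i) ≠ 0) ∧
      (∀ i j : Fin n, i ≠ j → t * μ i ≠ t * μ j) := by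
    intro t ht htl
    constructor
    · intro i
      have := abs_lt.mp (hbound t ht htl i)
      constructor <;> intro h <;> linarith [this.1, this.2]
    · intro i j hij e
      exact hij (hinj (mul_left_cancel₀ (ne_of_gt ht) e))
  refine ⟨t0, ht0, hdenoms, ?_⟩
  set F : ℝ → ℝ := fun t =>
    (∑ i : Fin n,
      ((-(1/2) + 1 / (2 + n * (t * μ i))) *
        ((2 * (t * μ i) * n * q + Real.sqrt (1 - 4 * q + (t * μ i) ^ 2 * n ^ 2 * q)) / (1 - 4 * q) - 1)
      + ((1/2) + 1 / (-2 + n * (t * μ i))) *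
        ((2 * (t * μ i) * n * q - Real.sqrt (1 - 4 * q + (t * μ i) ^ 2 * n ^ 2 * q)) / (1 - 4 * q) + 1)))
    - (4 * n * q / (1 - 4 * q)) * (n * (n - 1) / 2) with hFdef
  have heq : ∀ t ∈ Set.Ioo (0:ℝ) t0, G t = F t := by
    intro t ht
    obtain ⟨ht1, ht2⟩ := ht
    have ht' : t ≠ 0 := ne_of_gt ht1
    rw [hG t, hFdef]
    rw [← Finset.sum_add_distrib]
    have hper : ∀ i : Fin n,
        (-(1 / 2) - (∑ j ∈ Finset.univ.erase i, 1 / (t * μ i - t * μ j))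
            + 1 / (2 + n * (t * μ i))) *
          ((2 * (t * μ i) * n * q
              + Real.sqrt (1 - 4 * q + (t * μ i) ^ 2 * n ^ 2 * q)) / (1 - 4 * q) - 1)
        + ((1 / 2) - (∑ j ∈ Finset.univ.erase i, 1 / (t * μ i - t * μ j))
            + 1 / (-2 + n * (t * μ i))) *
          ((2 * (t * μ i) * n * q
              - Real.sqrt (1 - 4 * q + (t * μ i) ^ 2 * n ^ 2 * q)) / (1 - 4 * q) + 1)
        = ((-(1/2) + 1 / (2 + n * (t * μ i))) *
            ((2 * (t * μ i) * n * q + Real.sqrt (1 - 4 * q + (t * μ i) ^ 2 * n ^ 2 * q)) / (1 - 4 * q) - 1)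
          + ((1/2) + 1 / (-2 + n * (t * μ i))) *
            ((2 * (t * μ i) * n * q - Real.sqrt (1 - 4 * q + (t * μ i) ^ 2 * n ^ 2 * q)) / (1 - 4 * q) + 1))
          - ∑ j ∈ Finset.univ.erase i, (4 * (n:ℝ) * q / (1 - 4 * q)) * (μ i / (μ i - μ j)) := by
      intro i
      have hstep : ∀ j ∈ Finset.univ.erase i,
          (1 / (t * μ i - t * μ j)) * (4 * (t * μ i) * n * q / (1 - 4 * q))
            = (4 * (n:ℝ) * q / (1 - 4 * q)) * (μ i / (μ i - μ j)) := by
        intro j hj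
        have hj' : j ≠ i := (Finset.mem_erase.mp hj).1
        have hμ : μ i - μ j ≠ 0 := sub_ne_zero.mpr (fun e => hj' (hinj e.symm))
        have hd : t * μ i - t * μ j ≠ 0 := by
          rw [show t * μ i - t * μ j = t * (μ i - μ j) by ring]
          exact mul_ne_zero ht' hμ
        field_simp
      rw [← Finset.sum_congr rfl hstep, ← Finset.sum_mul]
      set SS := ∑ j ∈ Finset.univ.erase i, 1 / (t * μ i - t * μ j) with hSS
      set s := Real.sqrt (1 - 4 * q + (t * μ i) ^ 2 * n ^ 2 * q) with hs
      have hAB : ((2 * (t * μ i) * n * q + s) / (1 - 4 * q) - 1)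
          + ((2 * (t * μ i) * n * q - s) / (1 - 4 * q) + 1)
          = 4 * (t * μ i) * n * q / (1 - 4 * q) := by
        field_simp
        ring
      linear_combination (-SS) * hAB
    rw [Finset.sum_congr rfl (fun i _ => hper i), Finset.sum_sub_distrib]
    congr 1
    have : ∀ i : Fin n, (∑ j ∈ Finset.univ.erase i, (4 * (n:ℝ) * q / (1 - 4 * q)) * (μ i / (μ i - μ j)))
        = (4 * (n:ℝ) * q / (1 - 4 * q)) * ∑ j ∈ Finset.univ.erase i, μ i / (μ i - μ j) := by
      intro i; rw [Finset.mul_sum]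
    rw [Finset.sum_congr rfl (fun i _ => this i), ← Finset.mul_sum,
      sum_mu_ratio n (by omega) μ hinj]
  have hcontF : ContinuousAt F 0 := by
    rw [hFdef]
    apply ContinuousAt.sub _ continuousAt_const
    apply tendsto_finset_sum
    intro i _
    have hsq : ContinuousAt (fun t : ℝ => Real.sqrt (1 - 4 * q + (t * μ i) ^ 2 * n ^ 2 * q)) 0 := by
      exact Real.continuous_sqrt.continuousAt.comp (by fun_prop)
    have hden1 : (2:ℝ) + n * (0 * μ i) ≠ 0 := by norm_num
    have hden2 : (-2:ℝ) + n * (0 * μ i) ≠ 0 := by norm_num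
    apply ContinuousAt.add
    · apply ContinuousAt.mul
      · exact continuousAt_const.add (ContinuousAt.div continuousAt_const (by fun_prop) hden1)
      · exact ContinuousAt.sub (ContinuousAt.div (ContinuousAt.add (by fun_prop) hsq) continuousAt_const hD') continuousAt_const
    · apply ContinuousAt.mul
      · exact continuousAt_const.add (ContinuousAt.div continuousAt_const (by fun_prop) hden2)
      · exact ContinuousAt.add (ContinuousAt.div (ContinuousAt.sub (by fun_prop) hsq) continuousAt_const hD') continuousAt_const
  have hF0 : F 0 = -2 * n ^ 2 * ((n : ℝ) - 1) * q / (1 - 4 * q) := by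
    rw [hFdef]
    simp only
    have hz : ∀ i : Fin n,
        ((-(1/2) + 1 / (2 + (n:ℝ) * ((0:ℝ) * μ i))) *
          ((2 * ((0:ℝ) * μ i) * n * q + Real.sqrt (1 - 4 * q + ((0:ℝ) * μ i) ^ 2 * n ^ 2 * q)) / (1 - 4 * q) - 1)
        + ((1/2) + 1 / (-2 + (n:ℝ) * ((0:ℝ) * μ i))) *
          ((2 * ((0:ℝ) * μ i) * n * q - Real.sqrt (1 - 4 * q + ((0:ℝ) * μ i) ^ 2 * n ^ 2 * q)) / (1 - 4 * q) + 1)) = 0 := by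
      intro i
      norm_num
    rw [Finset.sum_congr rfl (fun i _ => hz i), Finset.sum_const_zero]
    field_simp
    ring
  have htendF : Tendsto F (nhdsWithin 0 (Set.Ioi 0)) (nhds (-2 * n ^ 2 * ((n : ℝ) - 1) * q / (1 - 4 * q))) := by
    rw [← hF0]
    exact hcontF.continuousWithinAt
  apply htendF.congr'
  filter_upwards [Ioo_mem_nhdsGT_of_mem (Set.mem_Ico.mpr ⟨le_refl 0, ht0⟩)] with t ht
  exact (heq t ht).symm
end
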